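/- Define R : [0,∞) → ℝ by R(k+α) = (1/2 − α)k − α²/2 for k ∈ ℤ≥0 and α ∈ [0,1). Then P[R](k+α) = (−1/6 + α/2 − α²/2) + o(1) as k → ∞, and consequently P²[R](x) → −1/12 as x → ∞. -/

import Mathlib

open Filter intervalIntegral MeasureTheory Set

/-- The continuous Cesàro operator (real-valued version). -/
noncomputable def cesaroPR (f : ℝ → ℝ) : ℝ → ℝ :=
  fun x => (1 / x) * ∫ t in (0 : ℝ)..x, f t

/-- The remainder function `R(k+α) = (1/2 - α)k - α²/2`. -/
noncomputable def remainderR : ℝ → ℝ :=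
  fun x => (1 / 2 - Int.fract x) * (⌊x⌋ : ℝ) - (Int.fract x) ^ 2 / 2

/-- The limiting profile `g(α) = -1/6 + α/2 - α²/2` composed with fract. -/
noncomputable def gper : ℝ → ℝ :=
  fun x => -(1 / 6) + Int.fract x / 2 - (Int.fract x) ^ 2 / 2

lemma measurable_floorR : Measurable (fun x : ℝ => (⌊x⌋ : ℝ)) := by
  have h : (fun x : ℝ => (⌊x⌋ : ℝ)) = fun x : ℝ => x - Int.fract x := by
    funext x; rw [Int.fract]; ring
  rw [h]; exact measurable_id.sub measurable_fract

lemma measR : Measurable remainderR := by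
  unfold remainderR
  exact ((measurable_const.sub measurable_fract).mul measurable_floorR).sub
    (((measurable_fract.pow measurable_const)).div measurable_const)

lemma measG : Measurable gper := by
  unfold gper
  exact ((measurable_const.add (measurable_fract.div measurable_const)).sub
    ((measurable_fract.pow measurable_const).div measurable_const))

lemma absG_le (t : ℝ) : |gper t| ≤ 1 := by
  have h1 := Int.fract_nonneg t
  have h2 := Int.fract_lt_one t
  rw [abs_le]; unfold gper; constructor <;> nlinarith

lemma absR_le (t : ℝ) : |remainderR t| ≤ |t| + 2 := by
  have h1 := Int.fract_nonneg t
  have h2 := Int.fract_lt_one t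
  have h3 : (⌊t⌋ : ℝ) = t - Int.fract t := by rw [Int.fract]; ring
  have h4 := le_abs_self t
  have h5 := neg_abs_le t
  rw [abs_le]; unfold remainderR; rw [h3]; constructor <;> nlinarith

lemma intR (a b : ℝ) : IntervalIntegrable remainderR volume a b := by
  rw [intervalIntegrable_iff]
  apply Integrable.mono' (g := fun _ => |a| + |b| + 2)
  · exact integrableOn_const (by rw [Set.uIoc]; exact measure_Ioc_lt_top.ne)
  · exact measR.aestronglyMeasurable.restrict
  · filter_upwards [ae_restrict_mem measurableSet_uIoc] with t ht
    have h1 : min a b < t := ht.1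
    have h2 : t ≤ max a b := ht.2
    have h3 : -(|a| + |b|) ≤ min a b := le_min (by nlinarith [le_abs_self a, neg_abs_le a, abs_nonneg b]) (by nlinarith [le_abs_self b, neg_abs_le b, abs_nonneg a])
    have h4 : max a b ≤ |a| + |b| := max_le (by nlinarith [le_abs_self a, abs_nonneg b]) (by nlinarith [le_abs_self b, abs_nonneg a])
    have h5 : |t| ≤ |a| + |b| := abs_le.2 ⟨by linarith, by linarith⟩
    calc ‖remainderR t‖ ≤ |t| + 2 := absR_le t
    _ ≤ |a| + |b| + 2 := by linarith

lemma intG (a b : ℝ) : IntervalIntegrable gper volume a b := by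
  rw [intervalIntegrable_iff]
  apply Integrable.mono' (g := fun _ => 1)
  · exact integrableOn_const (by rw [Set.uIoc]; exact measure_Ioc_lt_top.ne)
  · exact measG.aestronglyMeasurable.restrict
  · filter_upwards with t using absG_le t

lemma ae_ne (c : ℝ) : ∀ᵐ t : ℝ, t ≠ c := by
  rw [ae_iff]
  simp only [not_not, Set.setOf_eq_eq_singleton]
  exact measure_singleton c

lemma floor_on_cell {n : ℤ} {α t : ℝ} (h0 : 0 ≤ α) (h1 : α ≤ 1)
    (ht : t ∈ Set.uIoc (n : ℝ) ((n : ℝ) + α)) (hne : t ≠ (n : ℝ) + 1) :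
    (⌊t⌋ : ℝ) = (n : ℝ) ∧ Int.fract t = t - n := by
  rw [Set.uIoc_of_le (by linarith)] at ht
  have hlt : t < (n : ℝ) + 1 := lt_of_le_of_ne (by linarith [ht.2]) hne
  have hfl : ⌊t⌋ = n := by
    rw [Int.floor_eq_iff]
    exact ⟨le_of_lt ht.1, by exact_mod_cast hlt⟩
  refine ⟨by rw [hfl], ?_⟩
  rw [Int.fract, hfl]

lemma cellR (n : ℤ) (α : ℝ) (h0 : 0 ≤ α) (h1 : α ≤ 1) :
    ∫ t in (n : ℝ)..((n : ℝ) + α), remainderR t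
      = (n : ℝ) * (α / 2 - α ^ 2 / 2) - α ^ 3 / 6 := by
  have hcong : ∫ t in (n : ℝ)..((n : ℝ) + α), remainderR t
      = ∫ t in (n : ℝ)..((n : ℝ) + α), ((1 / 2 - (t - n)) * n - (t - n) ^ 2 / 2) := by
    apply intervalIntegral.integral_congr_ae
    filter_upwards [ae_ne ((n : ℝ) + 1)] with t hne hmem
    obtain ⟨hf, hfr⟩ := floor_on_cell h0 h1 hmem hne
    unfold remainderR; rw [hfr, hf]
  rw [hcong]
  have hderiv : ∀ t ∈ Set.uIcc (n : ℝ) ((n : ℝ) + α),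
      HasDerivAt (fun u : ℝ => 1 / 2 * n * u - n * (u - n) ^ 2 / 2 - (u - n) ^ 3 / 6)
        ((1 / 2 - (t - n)) * n - (t - n) ^ 2 / 2) t := by
    intro t _
    have hu : HasDerivAt (fun u : ℝ => u - n) 1 t := (hasDerivAt_id t).sub_const _
    have h2 : HasDerivAt (fun u : ℝ => (u - n) ^ 2) (2 * (t - n)) t := by
      simpa using hu.fun_pow 2
    have h3 : HasDerivAt (fun u : ℝ => (u - n) ^ 3) (3 * (t - n) ^ 2) t := by
      simpa using hu.fun_pow 3
    have h := (((hasDerivAt_id t).const_mul (1 / 2 * (n : ℝ))).sub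
      ((h2.const_mul (n : ℝ)).div_const 2)).sub (h3.div_const 6)
    exact h.congr_deriv (by ring)
  rw [intervalIntegral.integral_eq_sub_of_hasDerivAt hderiv
    (Continuous.intervalIntegrable (by continuity) _ _)]
  ring

lemma cellG (n : ℤ) (α : ℝ) (h0 : 0 ≤ α) (h1 : α ≤ 1) :
    ∫ t in (n : ℝ)..((n : ℝ) + α), gper t
      = -(α / 6) + α ^ 2 / 4 - α ^ 3 / 6 := by
  have hcong : ∫ t in (n : ℝ)..((n : ℝ) + α), gper t
      = ∫ t in (n : ℝ)..((n : ℝ) + α), (-(1 / 6) + (t - n) / 2 - (t - n) ^ 2 / 2) := by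
    apply intervalIntegral.integral_congr_ae
    filter_upwards [ae_ne ((n : ℝ) + 1)] with t hne hmem
    obtain ⟨hf, hfr⟩ := floor_on_cell h0 h1 hmem hne
    unfold gper; rw [hfr]
  rw [hcong]
  have hderiv : ∀ t ∈ Set.uIcc (n : ℝ) ((n : ℝ) + α),
      HasDerivAt (fun u : ℝ => -((u - n) / 6) + (u - n) ^ 2 / 4 - (u - n) ^ 3 / 6)
        (-(1 / 6) + (t - n) / 2 - (t - n) ^ 2 / 2) t := by
    intro t _
    have hu : HasDerivAt (fun u : ℝ => u - n) 1 t := (hasDerivAt_id t).sub_const _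
    have h2 : HasDerivAt (fun u : ℝ => (u - n) ^ 2) (2 * (t - n)) t := by
      simpa using hu.fun_pow 2
    have h3 : HasDerivAt (fun u : ℝ => (u - n) ^ 3) (3 * (t - n) ^ 2) t := by
      simpa using hu.fun_pow 3
    have h := (((hu.div_const 6).neg).add (h2.div_const 4)).sub (h3.div_const 6)
    exact h.congr_deriv (by ring)
  rw [intervalIntegral.integral_eq_sub_of_hasDerivAt hderiv
    (Continuous.intervalIntegrable (by continuity) _ _)]
  ring

lemma intR_nat (n : ℕ) : ∫ t in (0 : ℝ)..(n : ℝ), remainderR t = -(n : ℝ) / 6 := by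
  induction n with
  | zero => simp
  | succ m ih =>
    have hsplit := integral_add_adjacent_intervals (intR 0 (m : ℝ)) (intR (m : ℝ) ((m : ℝ) + 1))
    have hcell := cellR (m : ℤ) 1 (by norm_num) (le_refl 1)
    push_cast at hcell ⊢
    rw [← hsplit, ih, hcell]
    ring

lemma intG_nat (n : ℕ) : ∫ t in (0 : ℝ)..(n : ℝ), gper t = -(n : ℝ) / 12 := by
  induction n with
  | zero => simp
  | succ m ih =>
    have hsplit := integral_add_adjacent_intervals (intG 0 (m : ℝ)) (intG (m : ℝ) ((m : ℝ) + 1))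
    have hcell := cellG (m : ℤ) 1 (by norm_num) (le_refl 1)
    push_cast at hcell ⊢
    rw [← hsplit, ih, hcell]
    ring

lemma intR_formula (x : ℝ) (hx : 0 ≤ x) :
    ∫ t in (0 : ℝ)..x, remainderR t
      = (⌊x⌋ : ℝ) * (-(1 / 6) + Int.fract x / 2 - (Int.fract x) ^ 2 / 2)
        - (Int.fract x) ^ 3 / 6 := by
  have hk : 0 ≤ ⌊x⌋ := Int.floor_nonneg.2 hx
  have hsplit := integral_add_adjacent_intervals (intR 0 (⌊x⌋ : ℝ)) (intR (⌊x⌋ : ℝ) x)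
  have h1 : ∫ t in (0 : ℝ)..(⌊x⌋ : ℝ), remainderR t = -(⌊x⌋ : ℝ) / 6 := by
    have := intR_nat (⌊x⌋.toNat)
    rwa [show ((⌊x⌋.toNat : ℕ) : ℝ) = (⌊x⌋ : ℝ) by exact_mod_cast Int.toNat_of_nonneg hk] at this
  have h2 : ∫ t in (⌊x⌋ : ℝ)..x, remainderR t
      = (⌊x⌋ : ℝ) * (Int.fract x / 2 - (Int.fract x) ^ 2 / 2) - (Int.fract x) ^ 3 / 6 := by
    have := cellR ⌊x⌋ (Int.fract x) (Int.fract_nonneg x) (le_of_lt (Int.fract_lt_one x))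
    rwa [Int.floor_add_fract x] at this
  rw [← hsplit, h1, h2]
  ring

lemma intG_formula (x : ℝ) (hx : 0 ≤ x) :
    ∫ t in (0 : ℝ)..x, gper t
      = -(⌊x⌋ : ℝ) / 12 + (-(Int.fract x / 6) + (Int.fract x) ^ 2 / 4
        - (Int.fract x) ^ 3 / 6) := by
  have hk : 0 ≤ ⌊x⌋ := Int.floor_nonneg.2 hx
  have hsplit := integral_add_adjacent_intervals (intG 0 (⌊x⌋ : ℝ)) (intG (⌊x⌋ : ℝ) x)
  have h1 : ∫ t in (0 : ℝ)..(⌊x⌋ : ℝ), gper t = -(⌊x⌋ : ℝ) / 12 := by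
    have := intG_nat (⌊x⌋.toNat)
    rwa [show ((⌊x⌋.toNat : ℕ) : ℝ) = (⌊x⌋ : ℝ) by exact_mod_cast Int.toNat_of_nonneg hk] at this
  have h2 : ∫ t in (⌊x⌋ : ℝ)..x, gper t
      = -(Int.fract x / 6) + (Int.fract x) ^ 2 / 4 - (Int.fract x) ^ 3 / 6 := by
    have := cellG ⌊x⌋ (Int.fract x) (Int.fract_nonneg x) (le_of_lt (Int.fract_lt_one x))
    rwa [Int.floor_add_fract x] at this
  rw [← hsplit, h1, h2]

lemma cesaro_diff (x : ℝ) (hx : 0 < x) :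
    cesaroPR remainderR x - gper x
      = (-(Int.fract x) * gper x - (Int.fract x) ^ 3 / 6) / x := by
  obtain ⟨α, hα⟩ : ∃ α, Int.fract x = α := ⟨_, rfl⟩
  obtain ⟨k, hk⟩ : ∃ k, (⌊x⌋ : ℝ) = k := ⟨_, rfl⟩
  have hxk : k = x - α := by rw [← hα, ← hk, Int.fract]; ring
  unfold cesaroPR gper
  rw [intR_formula x (le_of_lt hx), hα, hk, hxk]
  field_simp
  ring

lemma absE_le (t : ℝ) (ht : 0 < t) :
    |cesaroPR remainderR t - gper t| ≤ Int.fract t / (3 * t) := by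
  have hα0 := Int.fract_nonneg t
  have hα1 := (Int.fract_lt_one t).le
  have hnum : |(-(Int.fract t) * gper t - (Int.fract t) ^ 3 / 6)| ≤ Int.fract t / 3 := by
    unfold gper
    rw [abs_le]
    constructor <;>
      nlinarith [sq_nonneg (Int.fract t), sq_nonneg (1 - Int.fract t),
        mul_nonneg hα0 hα0, mul_nonneg (mul_nonneg hα0 hα0) hα0,
        mul_nonneg (mul_nonneg hα0 hα0) (sub_nonneg.2 hα1)]
  rw [cesaro_diff t ht, abs_div, abs_of_pos ht, ← div_div]
  gcongr

lemma fract_le_self' (t : ℝ) (ht : 0 < t) : Int.fract t ≤ t := by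
  have h : (0 : ℝ) ≤ (⌊t⌋ : ℝ) := by exact_mod_cast Int.floor_nonneg.2 ht.le
  rw [Int.fract]; linarith

lemma absPR_le (t : ℝ) (ht : 0 < t) : |cesaroPR remainderR t| ≤ 2 := by
  have h1 := absE_le t ht
  have h2 := absG_le t
  have h3 : Int.fract t / (3 * t) ≤ 1 := by
    rw [div_le_one (by positivity)]
    have := fract_le_self' t ht
    linarith
  have h4 : |cesaroPR remainderR t| ≤ |cesaroPR remainderR t - gper t| + |gper t| := by
    have := abs_add_le (cesaroPR remainderR t - gper t) (gper t)
    simpa using this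
  linarith

lemma measPR : Measurable (cesaroPR remainderR) := by
  have contPrim : Continuous (fun b : ℝ => ∫ t in (0 : ℝ)..b, remainderR t) :=
    intervalIntegral.continuous_primitive intR 0
  unfold cesaroPR
  exact (measurable_const.div measurable_id).mul contPrim.measurable

lemma intPR (a b : ℝ) (ha : 0 ≤ a) (hb : 0 ≤ b) :
    IntervalIntegrable (cesaroPR remainderR) volume a b := by
  rw [intervalIntegrable_iff]
  apply Integrable.mono' (g := fun _ => 2)
  · exact integrableOn_const (by rw [Set.uIoc]; exact measure_Ioc_lt_top.ne)
  · exact measPR.aestronglyMeasurable.restrict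
  · filter_upwards [ae_restrict_mem measurableSet_uIoc] with t htm
    have ht : 0 < t := lt_of_le_of_lt (le_min ha hb) htm.1
    exact absPR_le t ht

/-- `P[R](k+α) = (-1/6 + α/2 - α²/2) + o(1)` as `x → ∞`, and consequently
`P²[R](x) → -1/12`. -/
theorem cesaro_remainder :
    Tendsto (fun x : ℝ =>
        cesaroPR remainderR x - (-(1 / 6) + Int.fract x / 2 - (Int.fract x) ^ 2 / 2))
      atTop (nhds 0)
    ∧ Tendsto (cesaroPR (cesaroPR remainderR)) atTop (nhds (-(1 / 12))) := by
  have hone : Tendsto (fun x : ℝ => 1 / x) atTop (nhds 0) := by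
    simpa [one_div] using tendsto_inv_atTop_zero (𝕜 := ℝ)
  have part1 : Tendsto (fun x : ℝ => cesaroPR remainderR x - gper x) atTop (nhds 0) := by
    apply squeeze_zero_norm' ?_ hone
    filter_upwards [eventually_ge_atTop (1 : ℝ)] with x hx
    have hx0 : (0 : ℝ) < x := lt_of_lt_of_le one_pos hx
    calc ‖cesaroPR remainderR x - gper x‖ ≤ Int.fract x / (3 * x) := absE_le x hx0
    _ ≤ 1 / x := by
      rw [div_le_div_iff₀ (by positivity) hx0]
      nlinarith [Int.fract_nonneg x, (Int.fract_lt_one x).le]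
  have hGlim : Tendsto (cesaroPR gper) atTop (nhds (-(1 / 12))) := by
    rw [← tendsto_sub_nhds_zero_iff]
    apply squeeze_zero_norm' ?_ hone
    filter_upwards [eventually_ge_atTop (1 : ℝ)] with x hx
    have hx0 : (0 : ℝ) < x := lt_of_lt_of_le one_pos hx
    have heq : cesaroPR gper x - (-(1 / 12))
        = (Int.fract x / 12 + (-(Int.fract x / 6) + (Int.fract x) ^ 2 / 4
            - (Int.fract x) ^ 3 / 6)) / x := by
      obtain ⟨α, hα⟩ : ∃ α, Int.fract x = α := ⟨_, rfl⟩
      obtain ⟨k, hk⟩ : ∃ k, (⌊x⌋ : ℝ) = k := ⟨_, rfl⟩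
      have hxk : k = x - α := by rw [← hα, ← hk, Int.fract]; ring
      unfold cesaroPR
      rw [intG_formula x hx0.le, hα, hk, hxk]
      field_simp
      ring
    rw [heq, Real.norm_eq_abs, abs_div, abs_of_pos hx0]
    have hb : |Int.fract x / 12 + (-(Int.fract x / 6) + (Int.fract x) ^ 2 / 4
        - (Int.fract x) ^ 3 / 6)| ≤ 1 := by
      rw [abs_le]
      constructor <;> nlinarith [Int.fract_nonneg x, (Int.fract_lt_one x).le,
        sq_nonneg (Int.fract x),
        mul_nonneg (mul_nonneg (Int.fract_nonneg x) (Int.fract_nonneg x)) (Int.fract_nonneg x)]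
    gcongr
  have hsa : Tendsto Real.sqrt atTop atTop := by
    apply tendsto_atTop_atTop.2
    intro b
    refine ⟨b ^ 2, fun x hx => ?_⟩
    calc b ≤ |b| := le_abs_self b
    _ = Real.sqrt (b ^ 2) := (Real.sqrt_sq_eq_abs b).symm
    _ ≤ Real.sqrt x := Real.sqrt_le_sqrt hx
  have hsqrt : Tendsto (fun x : ℝ => 1 / Real.sqrt x) atTop (nhds 0) := hone.comp hsa
  have key2 : Tendsto (fun x : ℝ =>
      (1 / x) * ∫ t in (0 : ℝ)..x, (cesaroPR remainderR t - gper t)) atTop (nhds 0) := by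
    apply squeeze_zero_norm' ?_ hsqrt
    filter_upwards [eventually_ge_atTop (1 : ℝ)] with x hx
    have hx0 : (0 : ℝ) < x := lt_of_lt_of_le one_pos hx
    set s := Real.sqrt x with hs
    have hs1 : 1 ≤ s := Real.one_le_sqrt.2 hx
    have hs0 : (0 : ℝ) < s := lt_of_lt_of_le one_pos hs1
    have hss : s * s = x := Real.mul_self_sqrt hx0.le
    have hsx : s ≤ x := by nlinarith
    have hiA := (intPR 0 s le_rfl hs0.le).sub (intG 0 s)
    have hiB := (intPR s x hs0.le hx0.le).sub (intG s x)
    have hsplit := integral_add_adjacent_intervals hiA hiB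
    have hI1 : ‖∫ t in (0 : ℝ)..s, (cesaroPR remainderR t - gper t)‖ ≤ (1 / 3) * |s - 0| := by
      apply intervalIntegral.norm_integral_le_of_norm_le_const
      intro t htm
      rw [Set.uIoc_of_le hs0.le] at htm
      have ht0 : 0 < t := htm.1
      calc ‖cesaroPR remainderR t - gper t‖ ≤ Int.fract t / (3 * t) := absE_le t ht0
      _ ≤ 1 / 3 := by
        rw [div_le_div_iff₀ (by positivity) (by norm_num : (0:ℝ) < 3)]
        have := fract_le_self' t ht0
        linarith
    have hI2 : ‖∫ t in s..x, (cesaroPR remainderR t - gper t)‖ ≤ (1 / (3 * s)) * |x - s| := by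
      apply intervalIntegral.norm_integral_le_of_norm_le_const
      intro t htm
      rw [Set.uIoc_of_le hsx] at htm
      have ht0 : 0 < t := lt_trans hs0 htm.1
      calc ‖cesaroPR remainderR t - gper t‖ ≤ Int.fract t / (3 * t) := absE_le t ht0
      _ ≤ 1 / (3 * s) := by
        rw [div_le_div_iff₀ (by positivity) (by positivity)]
        have h1 := (Int.fract_lt_one t).le
        have h2 := Int.fract_nonneg t
        have h3 : s ≤ t := htm.1.le
        nlinarith
    rw [← hsplit]
    set A := ∫ t in (0 : ℝ)..s, (cesaroPR remainderR t - gper t) with hA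
    set B := ∫ t in s..x, (cesaroPR remainderR t - gper t) with hB
    have h5 : ‖(1 / x) * (A + B)‖ = (1 / x) * ‖A + B‖ := by
      rw [norm_mul, Real.norm_eq_abs (1 / x), abs_of_pos (by positivity)]
    rw [h5]
    have h6 : ‖A + B‖ ≤ ‖A‖ + ‖B‖ := norm_add_le A B
    have h7 : (1 / x) * ‖A + B‖ ≤ (1 / x) * ((1 / 3) * |s - 0| + (1 / (3 * s)) * |x - s|) := by
      apply mul_le_mul_of_nonneg_left _ (by positivity)
      linarith
    refine h7.trans ?_
    rw [sub_zero, abs_of_pos hs0, abs_of_nonneg (sub_nonneg.2 hsx), ← hss]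
    have h9 : 1 / (s * s) * (1 / 3 * s + 1 / (3 * s) * (s * s - s))
        = (2 * s - 1) / (3 * (s * s)) := by
      field_simp
      ring
    rw [h9, div_le_div_iff₀ (by positivity) hs0]
    nlinarith
  have hEq : (fun x : ℝ => cesaroPR gper x
      + (1 / x) * ∫ t in (0 : ℝ)..x, (cesaroPR remainderR t - gper t))
      =ᶠ[atTop] cesaroPR (cesaroPR remainderR) := by
    filter_upwards [eventually_ge_atTop (1 : ℝ)] with x hx
    have hx0 : (0 : ℝ) < x := lt_of_lt_of_le one_pos hx
    have hsum : (∫ t in (0 : ℝ)..x, gper t)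
        + (∫ t in (0 : ℝ)..x, (cesaroPR remainderR t - gper t))
        = ∫ t in (0 : ℝ)..x, cesaroPR remainderR t := by
      rw [← intervalIntegral.integral_add (intG 0 x)
        ((intPR 0 x le_rfl hx0.le).sub (intG 0 x))]
      exact intervalIntegral.integral_congr (fun t _ => by ring)
    show (1 / x) * (∫ t in (0 : ℝ)..x, gper t)
        + (1 / x) * (∫ t in (0 : ℝ)..x, (cesaroPR remainderR t - gper t))
        = (1 / x) * ∫ t in (0 : ℝ)..x, cesaroPR remainderR t
    rw [← hsum]
    ring
  refine ⟨part1, ?_⟩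
  have hcomb := hGlim.add key2
  rw [add_zero] at hcomb
  exact hcomb.congr' hEq
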